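/- For all real numbers t and x with 0 ≤ t ≤ 1 and x ≥ 1, one has (1 + t)^x ≥ 1 + (2^x − 1)·t^x. -/

import Mathlib

open Real Set

lemma aux_mono (x : ℝ) (hx : 1 ≤ x) :
    MonotoneOn (fun v : ℝ => (v + 1) ^ x - v ^ x) (Set.Ici 0) := by
  have hderiv : ∀ v : ℝ, HasDerivAt (fun v : ℝ => (v + 1) ^ x - v ^ x)
      (x * (v + 1) ^ (x - 1) - x * v ^ (x - 1)) v := by
    intro v
    have h1 : HasDerivAt (fun v : ℝ => (v + 1) ^ x) (x * (v + 1) ^ (x - 1) * 1) v := by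
      exact (Real.hasDerivAt_rpow_const (Or.inr hx)).comp v
        ((hasDerivAt_id v).add_const 1)
    have h2 : HasDerivAt (fun v : ℝ => v ^ x) (x * v ^ (x - 1)) v :=
      Real.hasDerivAt_rpow_const (Or.inr hx)
    have h3 := h1.sub h2
    rw [mul_one] at h3
    exact h3
  apply monotoneOn_of_deriv_nonneg (convex_Ici 0)
  · exact Continuous.continuousOn
      (continuous_iff_continuousAt.2 fun v => (hderiv v).continuousAt)
  · intro v hv
    exact (hderiv v).differentiableAt.differentiableWithinAt
  · intro v hv
    rw [(hderiv v).deriv]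
    have hv0 : 0 ≤ v := le_of_lt (by simpa using hv)
    have : v ^ (x - 1) ≤ (v + 1) ^ (x - 1) :=
      Real.rpow_le_rpow hv0 (by linarith) (by linarith)
    nlinarith [this, hx]

theorem pow_ineq_ge (t x : ℝ) (ht0 : 0 ≤ t) (ht1 : t ≤ 1) (hx : 1 ≤ x) :
    (1 + t) ^ x ≥ 1 + (2 ^ x - 1) * t ^ x := by
  rcases eq_or_lt_of_le ht0 with h | ht
  · subst h
    rw [Real.zero_rpow (by linarith : x ≠ 0)]
    simp
  · have hkey := aux_mono x hx (Set.mem_Ici.2 (by norm_num : (0:ℝ) ≤ 1))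
      (Set.mem_Ici.2 (by positivity : (0:ℝ) ≤ 1 / t))
      ((le_div_iff₀ ht).2 (by linarith))
    simp only at hkey
    have htx : 0 < t ^ x := Real.rpow_pos_of_pos ht x
    have hmul : ((1 / t + 1) ^ x - (1 / t) ^ x) * t ^ x = (1 + t) ^ x - 1 := by
      rw [sub_mul, ← Real.mul_rpow (by positivity) ht0,
        ← Real.mul_rpow (by positivity) ht0]
      rw [show (1 / t + 1) * t = 1 + t by field_simp,
        show (1 / t) * t = 1 by field_simp, Real.one_rpow]
    have h2 : ((1:ℝ) + 1) ^ x - (1:ℝ) ^ x = 2 ^ x - 1 := by norm_num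
    have h3 := mul_le_mul_of_nonneg_right hkey htx.le
    rw [hmul, h2] at h3
    linarith
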